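/- arXiv:2604.13619 — 2 statements merged into one kernel-verified Lean document; each statement's English description precedes it below -/
import Mathlib

section
/- Let A, B and C be three rings with B and C commutative. Let g : A → B and f : B → C be two central ℤ-linear maps. Let n ≥ 2 and a_1, …, a_n ∈ A. For each i ∈ [n−1], define (a_1^{(i)}, …, a_{n-1}^{(i)}) := (a_1, …, a_{i-1}, a_i·a_n, a_{i+1}, …, a_{n-1}); for a subset P = {p_1, …, p_r} of [n] set b_P := g_r(a_{p_1}, …, a_{p_r}), and for P ⊆ [n−1] set b_P^{(i)} := g_r(a_{p_1}^{(i)}, …, a_{p_r}^{(i)}). Let del : Π_{[n]} → Π_{[n-1]} send each set partition π of [n] to the partition of [n−1] obtained by deleting n from its block (removing the block if it becomes empty). Then for every set partition ω = {Q_1, …, Q_ℓ} of [n−1]: Σ_{π = {P_1, …, P_k} ∈ Π_{[n]}, del(π) = ω} f_k(b_{P_1}, …, b_{P_k}) = f(g(a_n)) · f_ℓ(b_{Q_1}, …, b_{Q_ℓ}) − Σ_{i=1}^{n-1} f_ℓ(b_{Q_1}^{(i)}, …, b_{Q_ℓ}^{(i)}). -/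
open scoped Classical

noncomputable section

/-- A `ℤ`-linear map `f : A → B` is *central* if `f (a * a') = f (a' * a)` for all `a, a'`. -/
def Central {A B : Type*} [Ring A] [CommRing B] (f : A →ₗ[ℤ] B) : Prop :=
  ∀ a a' : A, f (a * a') = f (a' * a)

/-- The product `a x * a (σ x) * a (σ² x) * ⋯` along the cycle of the permutation `σ`
containing `x`, starting at `x` (the cycle has length `Function.minimalPeriod σ x`). -/
def cycleProdAt {ι A : Type*} [Ring A] (a : ι → A) (σ : Equiv.Perm ι) (x : ι) : A :=
  ((List.range (Function.minimalPeriod (⇑σ) x)).map (fun j => a ((σ ^ j) x))).prod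

/-- The Frobenius map of a central `ℤ`-linear map `f : A → B`, applied to a finite family
`a : ι → A`:  `∑_{σ} sgn σ • ∏_{cycles c of σ} f (a_{i₁} a_{i₂} ⋯ a_{i_k})`, where each cycle
is represented by the product along it starting from its distinguished element (the one
minimizing a fixed enumeration of `ι`); when `f` is central this agrees with the classical
definition, which is independent of the starting points. -/
def frob {ι A B : Type*} [Fintype ι] [DecidableEq ι] [Ring A] [CommRing B]
    (f : A →ₗ[ℤ] B) (a : ι → A) : B :=
  ∑ σ : Equiv.Perm ι, (Equiv.Perm.sign σ : ℤ) •
    ∏ x : ι,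
      if ∀ j : ℕ, (Fintype.equivFin ι) x ≤ (Fintype.equivFin ι) ((σ ^ j) x)
      then f (cycleProdAt a σ x) else 1

/-- `f` is an `n`-homomorphism if it is central and its `(n+1)`-Frobenius map vanishes. -/
def IsNHom {A B : Type*} [Ring A] [CommRing B] (n : ℕ) (f : A →ₗ[ℤ] B) : Prop :=
  Central f ∧ ∀ a : Fin (n + 1) → A, frob f a = 0

/-- `π` is a set partition of the finite set `J`: its blocks are nonempty, pairwise
disjoint, and their union is `J`. -/
def IsSetPartition {α : Type*} [DecidableEq α] (J : Finset α) (π : Finset (Finset α)) : Prop :=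
  (∀ P ∈ π, P.Nonempty) ∧
  (∀ P ∈ π, ∀ Q ∈ π, P ≠ Q → Disjoint P Q) ∧
  π.biUnion id = J

/-- Delete the element `n` from the block of `π` containing it (removing the block if it
becomes empty). -/
def delPart (n : ℕ) (π : Finset (Finset ℕ)) : Finset (Finset ℕ) :=
  (π.image (fun P => P.erase n)).erase ∅

namespace Aux13
open Equiv Function Finset

variable {ι κ A B M : Type*}

/-- the distinguished-point condition used in `frob` -/
def mindist [Fintype ι] (σ : Perm ι) (x : ι) : Prop :=
  ∀ j : ℕ, (Fintype.equivFin ι) x ≤ (Fintype.equivFin ι) ((σ ^ j) x)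

theorem frob_def [Fintype ι] [DecidableEq ι] [Ring A] [CommRing B]
    (f : A →ₗ[ℤ] B) (a : ι → A) :
    frob f a = ∑ σ : Perm ι, (Equiv.Perm.sign σ : ℤ) •
      ∏ x : ι, if mindist σ x then f (cycleProdAt a σ x) else 1 := rfl

theorem mem_periodicPts [Fintype ι] (σ : Perm ι) (x : ι) : x ∈ Function.periodicPts ⇑σ := by
  refine ⟨orderOf σ, orderOf_pos σ, ?_⟩
  show (⇑σ)^[orderOf σ] x = x
  rw [← Equiv.Perm.coe_pow, pow_orderOf_eq_one]; rfl

theorem minimalPeriod_pos [Fintype ι] (σ : Perm ι) (x : ι) :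
    0 < Function.minimalPeriod (⇑σ) x :=
  Function.minimalPeriod_pos_of_mem_periodicPts (mem_periodicPts σ x)

theorem pow_minimalPeriod_apply [Fintype ι] (σ : Perm ι) (x : ι) :
    (σ ^ Function.minimalPeriod (⇑σ) x) x = x := by
  have := Function.iterate_minimalPeriod (f := ⇑σ) (x := x)
  rw [← Equiv.Perm.coe_pow] at this; exact this

theorem pow_apply_pow_apply [Fintype ι] (σ : Perm ι) (x : ι) (j : ℕ) :
    (σ ^ j) (σ x) = (σ ^ (j + 1)) x := by
  rw [pow_succ, Equiv.Perm.mul_apply]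

section CProd
variable [Ring A] [CommRing B]

theorem central_cycleProdAt_apply_step [Fintype ι] (f : A →ₗ[ℤ] B) (hf : Central f)
    (a : ι → A) (σ : Perm ι) (x : ι) :
    f (cycleProdAt a σ x) = f (cycleProdAt a σ (σ x)) := by
  obtain ⟨T', hT⟩ : ∃ T', Function.minimalPeriod (⇑σ) x = T' + 1 :=
    ⟨_, (Nat.succ_pred_eq_of_pos (minimalPeriod_pos σ x)).symm⟩
  have hTs : Function.minimalPeriod (⇑σ) (σ x) = T' + 1 := by
    rw [Function.minimalPeriod_apply (mem_periodicPts σ x)]; exact hT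
  have hper : a ((σ ^ (T' + 1)) x) = a x := by
    have := pow_minimalPeriod_apply σ x; rw [hT] at this; rw [this]
  set M : A := ((List.range T').map (fun j => a ((σ ^ (j + 1)) x))).prod with hM
  have h1 : cycleProdAt a σ x = a x * M := by
    unfold cycleProdAt
    rw [hT, List.range_succ_eq_map, List.map_cons, List.map_map, List.prod_cons, pow_zero]
    congr 1
  have h2 : cycleProdAt a σ (σ x) = M * a x := by
    unfold cycleProdAt
    rw [hTs, show T' + 1 = T'.succ from rfl, List.range_succ, List.map_append,
      List.prod_append, List.map_singleton, List.prod_singleton,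
      pow_apply_pow_apply, hper]
    simp only [pow_apply_pow_apply]
    rfl
  rw [h1, h2]; exact hf _ _

theorem central_cycleProdAt_sameCycle [Fintype ι] (f : A →ₗ[ℤ] B) (hf : Central f)
    (a : ι → A) (σ : Perm ι) {x y : ι} (h : σ.SameCycle x y) :
    f (cycleProdAt a σ x) = f (cycleProdAt a σ y) := by
  obtain ⟨m, -, rfl⟩ := h.exists_pow_eq'
  clear h
  induction m with
  | zero => simp
  | succ m ih =>
    rw [ih, show (σ ^ (m+1)) x = σ ((σ^m) x) by rw [pow_succ', Equiv.Perm.mul_apply]]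
    exact central_cycleProdAt_apply_step f hf a σ _

theorem sameCycle_pow [Fintype ι] (σ : Perm ι) (x : ι) (j : ℕ) : σ.SameCycle x ((σ ^ j) x) :=
  ⟨j, by rw [zpow_natCast]⟩

theorem mindist_min [Fintype ι] {σ : Perm ι} {x y : ι} (hx : mindist σ x)
    (h : σ.SameCycle x y) : Fintype.equivFin ι x ≤ Fintype.equivFin ι y := by
  obtain ⟨m, -, rfl⟩ := h.exists_pow_eq'
  exact hx m

theorem existsUnique_mindist [Fintype ι] (σ : Perm ι) (x : ι) :
    ∃! y, σ.SameCycle x y ∧ mindist σ y := by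
  classical
  have hne : (univ.filter (fun y => σ.SameCycle x y)).Nonempty :=
    ⟨x, by simp [Equiv.Perm.SameCycle.refl]⟩
  obtain ⟨y, hy, hmin⟩ := Finset.exists_min_image _ (fun y => Fintype.equivFin ι y) hne
  rw [mem_filter] at hy
  have hyc : σ.SameCycle x y := hy.2
  have hym : mindist σ y := by
    intro j
    have : (σ ^ j) y ∈ univ.filter (fun z => σ.SameCycle x z) := by
      simp only [mem_filter, mem_univ, true_and]
      exact hyc.trans (sameCycle_pow σ y j)
    exact hmin _ this
  refine ⟨y, ⟨hyc, hym⟩, ?_⟩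
  rintro z ⟨hzc, hzm⟩
  have h1 := mindist_min hzm (hzc.symm.trans hyc)
  have h2 := mindist_min hym (hyc.symm.trans hzc)
  exact (Fintype.equivFin ι).injective (le_antisymm h1 h2)

/-- product over a transversal is independent of the transversal -/
theorem prod_transversal [Fintype ι] [CommMonoid M] (σ : Perm ι) (G : ι → M)
    (hG : ∀ x y, σ.SameCycle x y → G x = G y)
    (p q : ι → Prop) [DecidablePred p] [DecidablePred q]
    (hp : ∀ x, ∃! y, σ.SameCycle x y ∧ p y)
    (hq : ∀ x, ∃! y, σ.SameCycle x y ∧ q y) :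
    (∏ x, if p x then G x else 1) = ∏ x, if q x then G x else 1 := by
  rw [← Finset.prod_filter, ← Finset.prod_filter]
  refine Finset.prod_bij (fun x _ => Classical.choose (hq x)) ?_ ?_ ?_ ?_
  · intro x hx
    simp only [mem_filter, mem_univ, true_and]
    exact (Classical.choose_spec (hq x)).1.2
  · intro x₁ hx₁ x₂ hx₂ h
    rw [mem_filter] at hx₁ hx₂
    have s₁ := (Classical.choose_spec (hq x₁)).1.1
    have s₂ := (Classical.choose_spec (hq x₂)).1.1
    -- x₁ and x₂ are both p-points in the cycle of choose (hq x₁)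
    have hc : σ.SameCycle x₁ x₂ := s₁.trans (by rw [show Classical.choose (hq x₁) = Classical.choose (hq x₂) from h]; exact s₂.symm)
    obtain ⟨y, -, huniq⟩ := hp x₁
    have e1 := huniq x₁ ⟨Equiv.Perm.SameCycle.refl _ _, hx₁.2⟩
    have e2 := huniq x₂ ⟨hc, hx₂.2⟩
    rw [e1, e2]
  · intro y hy
    rw [mem_filter] at hy
    obtain ⟨x, hx, -⟩ := hp y
    refine ⟨x, by simp [hx.2], ?_⟩
    -- choose (hq x) is the unique q-point in cycle of x; y is a q-point in cycle of x
    obtain ⟨z, -, huniq⟩ := hq x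
    have e1 := huniq (Classical.choose (hq x)) (Classical.choose_spec (hq x)).1
    have e2 := huniq y ⟨hx.1.symm, hy.2⟩
    show Classical.choose (hq x) = y
    rw [e1, e2]
  · intro x hx
    exact hG _ _ (Classical.choose_spec (hq x)).1.1

/-- transfer of cycle products along a conjugating map -/
theorem cycleProdAt_eq_of_iterates [Ring A] (σ : Perm κ) (σ' : Perm ι) (φ : κ → ι)
    (b : κ → A) (a : ι → A) (x : κ)
    (h : ∀ k : ℕ, (σ' ^ k) (φ x) = φ ((σ ^ k) x))
    (h2 : ∀ k : ℕ, (σ' ^ k) (φ x) = φ x → (σ ^ k) x = x)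
    (hval : ∀ k : ℕ, a (φ ((σ ^ k) x)) = b ((σ ^ k) x)) :
    cycleProdAt a σ' (φ x) = cycleProdAt b σ x := by
  have hper : Function.minimalPeriod (⇑σ') (φ x) = Function.minimalPeriod (⇑σ) x := by
    rw [Function.minimalPeriod_eq_minimalPeriod_iff]
    intro n
    show (⇑σ')^[n] (φ x) = φ x ↔ (⇑σ)^[n] x = x
    rw [← Equiv.Perm.coe_pow, ← Equiv.Perm.coe_pow]
    constructor
    · exact h2 n
    · intro hh; rw [h n, hh]
  unfold cycleProdAt
  rw [hper]
  congr 1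
  apply List.map_congr_left
  intro j _
  rw [h j, hval j]

theorem frob_comp_equiv [Fintype ι] [DecidableEq ι] [Fintype κ] [DecidableEq κ]
    (f : A →ₗ[ℤ] B) (hf : Central f) (a : ι → A) (e : κ ≃ ι) :
    frob f (fun x => a (e x)) = frob f a := by
  rw [frob_def, frob_def]
  refine Fintype.sum_equiv e.permCongr _ _ ?_
  intro σ
  rw [Equiv.Perm.sign_permCongr]
  congr 1
  set σ' : Perm ι := e.permCongr σ with hσ'
  have hpow : ∀ (j : ℕ) (x : κ), (σ' ^ j) (e x) = e ((σ ^ j) x) := by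
    intro j
    induction j with
    | zero => intro x; simp
    | succ j ih =>
      intro x
      rw [pow_succ', Equiv.Perm.mul_apply, ih, pow_succ', Equiv.Perm.mul_apply]
      show e.permCongr σ (e ((σ ^ j) x)) = _
      rw [Equiv.permCongr_apply, Equiv.symm_apply_apply]
  have hsc : ∀ x y : κ, σ'.SameCycle (e x) (e y) ↔ σ.SameCycle x y := by
    intro x y
    constructor
    · intro h
      obtain ⟨m, -, hm⟩ := h.exists_pow_eq'
      exact ⟨m, by rw [zpow_natCast]; exact e.injective (by rw [← hpow]; exact hm)⟩
    · intro h
      obtain ⟨m, -, hm⟩ := h.exists_pow_eq'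
      exact ⟨m, by rw [zpow_natCast, hpow, hm]⟩
  have key : ∀ x : κ, cycleProdAt (fun z => a (e z)) σ x = cycleProdAt a σ' (e x) := by
    intro x
    exact (cycleProdAt_eq_of_iterates σ σ' e (fun z => a (e z)) a x (fun k => hpow k x)
      (fun k hk => e.injective (by rw [← hpow]; exact hk)) (fun k => rfl)).symm
  calc (∏ x : κ, if mindist σ x then f (cycleProdAt (fun z => a (e z)) σ x) else 1)
      = ∏ y : ι, if mindist σ (e.symm y) then f (cycleProdAt a σ' y) else 1 := by
        refine Fintype.prod_equiv e _ _ ?_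
        intro x
        rw [key x]
        simp
    _ = ∏ y : ι, if mindist σ' y then f (cycleProdAt a σ' y) else 1 := by
        refine prod_transversal σ' _ ?_ _ _ ?_ (existsUnique_mindist σ')
        · intro x y h; exact central_cycleProdAt_sameCycle f hf a σ' h
        · intro y
          obtain ⟨w, ⟨hw1, hw2⟩, huniq⟩ := existsUnique_mindist σ (e.symm y)
          refine ⟨e w, ⟨?_, by simpa using hw2⟩, ?_⟩
          · have := (hsc (e.symm y) w).2 hw1
            simpa using this
          · rintro z ⟨hz1, hz2⟩
            have hzc : σ.SameCycle (e.symm y) (e.symm z) := by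
              apply (hsc (e.symm y) (e.symm z)).1
              simpa using hz1
            have := huniq (e.symm z) ⟨hzc, hz2⟩
            rw [← this]; simp

theorem frob_unique [Unique ι] [Fintype ι] [DecidableEq ι] (f : A →ₗ[ℤ] B) (a : ι → A) :
    frob f a = f (a default) := by
  rw [frob_def]
  rw [Fintype.sum_unique]
  have h1 : (1 : Perm ι) = default := Subsingleton.elim _ _
  simp only [← h1]
  rw [Fintype.prod_unique]
  have hmd : mindist (1 : Perm ι) default := by intro j; simp
  rw [if_pos hmd]
  have : cycleProdAt a 1 (default : ι) = a default := by
    unfold cycleProdAt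
    have : Function.minimalPeriod (⇑(1 : Perm ι)) default = 1 := by
      simp [Equiv.Perm.coe_one, Function.minimalPeriod_id]
    rw [this]
    simp
  rw [this]
  simp
theorem pow_mod_minimalPeriod_apply [Fintype ι] (σ : Perm ι) (x : ι) (m : ℕ) :
    (σ ^ (m % Function.minimalPeriod (⇑σ) x)) x = (σ ^ m) x := by
  have := Function.iterate_mod_minimalPeriod_eq (f := ⇑σ) (x := x) (n := m)
  rwa [← Equiv.Perm.coe_pow, ← Equiv.Perm.coe_pow] at this

theorem pow_apply_injOn [Fintype ι] (σ : Perm ι) (x : ι) {j k : ℕ}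
    (hj : j < Function.minimalPeriod (⇑σ) x) (hk : k < Function.minimalPeriod (⇑σ) x)
    (h : (σ ^ j) x = (σ ^ k) x) : j = k := by
  refine Function.iterate_injOn_Iio_minimalPeriod hj hk ?_
  show (⇑σ)^[j] x = (⇑σ)^[k] x
  rw [← Equiv.Perm.coe_pow, ← Equiv.Perm.coe_pow]
  exact h

theorem frob_update_add [Fintype ι] [DecidableEq ι] (f : A →ₗ[ℤ] B) (a : ι → A) (i : ι)
    (u v : A) :
    frob f (Function.update a i (u + v)) =
      frob f (Function.update a i u) + frob f (Function.update a i v) := by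
  rw [frob_def, frob_def, frob_def, ← Finset.sum_add_distrib]
  refine Finset.sum_congr rfl ?_
  intro σ _
  rw [← smul_add]
  congr 1
  -- distinguished point of the cycle of i
  obtain ⟨x₀, ⟨hx₀c, hx₀m⟩, huniq⟩ := existsUnique_mindist σ i
  set T := Function.minimalPeriod (⇑σ) x₀ with hTdef
  have hTpos : 0 < T := minimalPeriod_pos σ x₀
  obtain ⟨j₀, hj₀T, hj₀⟩ : ∃ j₀ < T, (σ ^ j₀) x₀ = i := by
    obtain ⟨m, -, hm⟩ := hx₀c.symm.exists_pow_eq'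
    exact ⟨m % T, Nat.mod_lt _ hTpos, by rw [pow_mod_minimalPeriod_apply]; exact hm⟩
  -- cycles avoiding i are unaffected
  have horb : ∀ (x : ι), ¬ σ.SameCycle i x → ∀ c : A,
      cycleProdAt (Function.update a i c) σ x = cycleProdAt a σ x := by
    intro x hx c
    unfold cycleProdAt
    congr 1
    apply List.map_congr_left
    intro j _
    apply Function.update_of_ne
    intro hji
    exact hx ⟨-j, by rw [← hji]; simp [zpow_neg, zpow_natCast]⟩
  -- the factor at x₀ is p * c * s
  set r := T - (j₀ + 1) with hrdef
  set p : A := ((List.range j₀).map (fun j => a ((σ ^ j) x₀))).prod with hp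
  set s : A := ((List.range r).map (fun j => a ((σ ^ (j₀ + 1 + j)) x₀))).prod with hs
  have hTsplit : T = (j₀ + 1) + r := by omega
  have hfac : ∀ c : A, cycleProdAt (Function.update a i c) σ x₀ = p * c * s := by
    intro c
    unfold cycleProdAt
    rw [← hTdef, hTsplit, List.range_add, List.map_append, List.prod_append,
      show j₀ + 1 = j₀.succ from rfl, List.range_succ, List.map_append, List.prod_append,
      List.map_singleton, List.prod_singleton, List.map_map]
    congr 1
    · congr 1
      · rw [hp]; refine congrArg List.prod ?_; apply List.map_congr_left; intro j hj
        rw [List.mem_range] at hj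
        apply Function.update_of_ne
        intro hji
        have := pow_apply_injOn σ x₀ (show j < T by omega) hj₀T (by rw [hji, hj₀])
        omega
      · rw [hj₀, Function.update_self]
    · rw [hs]; refine congrArg List.prod ?_; apply List.map_congr_left; intro j hj
      rw [List.mem_range] at hj
      show Function.update a i c ((σ ^ (j₀.succ + j)) x₀) = a ((σ ^ (j₀ + 1 + j)) x₀)
      have hne : (σ ^ (j₀ + 1 + j)) x₀ ≠ i := by
        intro hji
        have := pow_apply_injOn σ x₀ (show j₀ + 1 + j < T by omega) hj₀T (by rw [hji, hj₀])
        omega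
      rw [show j₀.succ + j = j₀ + 1 + j from rfl, Function.update_of_ne hne]
  -- split off the x₀ factor
  have hmain : ∀ c : A, (∏ x : ι, if mindist σ x then
        f (cycleProdAt (Function.update a i c) σ x) else 1) =
      (∏ x ∈ univ.erase x₀, if mindist σ x then f (cycleProdAt a σ x) else 1) *
        f (p * c * s) := by
    intro c
    rw [← Finset.prod_erase_mul univ _ (mem_univ x₀)]
    congr 1
    · refine Finset.prod_congr rfl ?_
      intro x hx
      rw [mem_erase] at hx
      by_cases hmx : mindist σ x
      · rw [if_pos hmx, if_pos hmx]
        congr 1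
        apply horb
        intro hsc
        exact hx.1 (huniq x ⟨hsc, hmx⟩)
      · rw [if_neg hmx, if_neg hmx]
    · rw [if_pos hx₀m, hfac c]
  rw [hmain (u + v), hmain u, hmain v, ← mul_add]
  congr 1
  rw [mul_add, add_mul, map_add]
theorem pow_succ_apply {ι : Type*} (σ : Perm ι) (k : ℕ) (x : ι) :
    (σ ^ (k + 1)) x = σ ((σ ^ k) x) := by
  rw [pow_succ', Equiv.Perm.mul_apply]

theorem sameCycle_of_apply {ι : Type*} (σ : Perm ι) (x : ι) : σ.SameCycle x (σ x) :=
  ⟨1, by rw [zpow_one]⟩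

theorem sameCycle_pow' {ι : Type*} (σ : Perm ι) (x : ι) (k : ℕ) :
    σ.SameCycle x ((σ ^ k) x) := ⟨k, by rw [zpow_natCast]⟩

theorem frob_option [Fintype ι] [DecidableEq ι] (f : A →ₗ[ℤ] B) (hf : Central f)
    (a : ι → A) (d : A) :
    frob f (fun o : Option ι => o.elim d a) =
      f d * frob f a - ∑ i : ι, frob f (Function.update a i (a i * d)) := by
  set a' : Option ι → A := fun o => o.elim d a with ha'
  rw [frob_def]
  rw [← Fintype.sum_equiv (Equiv.Perm.decomposeOption.symm)
    (fun p => (Equiv.Perm.sign (Equiv.Perm.decomposeOption.symm p) : ℤ) •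
      ∏ x : Option ι, if mindist (Equiv.Perm.decomposeOption.symm p) x then
        f (cycleProdAt a' (Equiv.Perm.decomposeOption.symm p) x) else 1)
    _ (fun p => rfl)]
  rw [Fintype.sum_prod_type]
  rw [Fintype.sum_option]
  -- ===================== the `none` part =====================
  have hnone_eq : ∀ τ : Perm ι,
      (Equiv.Perm.decomposeOption.symm ((none : Option ι), τ)) = τ.optionCongr := by
    intro τ
    ext x
    rw [Equiv.Perm.decomposeOption_symm_of_none_apply]
    rfl
  have hpow_some : ∀ (τ : Perm ι) (k : ℕ) (j : ι),
      ((τ.optionCongr : Perm (Option ι)) ^ k) (some j) = some ((τ ^ k) j) := by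
    intro τ k
    induction k with
    | zero => intro j; simp
    | succ k ih =>
      intro j
      rw [pow_succ_apply, ih, pow_succ_apply]
      rfl
  have hpow_none : ∀ (τ : Perm ι) (k : ℕ),
      ((τ.optionCongr : Perm (Option ι)) ^ k) none = none := by
    intro τ k
    induction k with
    | zero => rw [pow_zero]; rfl
    | succ k ih => rw [pow_succ_apply, ih]; rfl
  have part_none : ∀ τ : Perm ι,
      (∏ x : Option ι, if mindist τ.optionCongr x then f (cycleProdAt a' τ.optionCongr x) else 1)
        = f d * ∏ i : ι, (if mindist τ i then f (cycleProdAt a τ i) else 1) := by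
    intro τ
    have scNone : ∀ z, Equiv.Perm.SameCycle (τ.optionCongr : Perm (Option ι)) none z ↔ z = none := by
      intro z
      constructor
      · intro h
        exact (h.eq_of_left (by show τ.optionCongr none = none; rfl)).symm
      · rintro rfl; exact Equiv.Perm.SameCycle.refl _ _
    have scSome : ∀ i j : ι,
        Equiv.Perm.SameCycle (τ.optionCongr : Perm (Option ι)) (some i) (some j) ↔ τ.SameCycle i j := by
      intro i j
      constructor
      · intro h
        obtain ⟨m, -, hm⟩ := h.exists_pow_eq'
        rw [hpow_some] at hm
        exact ⟨m, by rw [zpow_natCast]; exact Option.some_injective ι hm⟩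
      · intro h
        obtain ⟨m, -, hm⟩ := h.exists_pow_eq'
        exact ⟨m, by rw [zpow_natCast, hpow_some, hm]⟩
    set q : Option ι → Prop := fun x => x = none ∨ ∃ j, x = some j ∧ mindist τ j with hqdef
    have hq : ∀ x, ∃! y, Equiv.Perm.SameCycle (τ.optionCongr : Perm (Option ι)) x y ∧ q y := by
      intro x
      match x with
      | none =>
        refine ⟨none, ⟨Equiv.Perm.SameCycle.refl _ _, Or.inl rfl⟩, ?_⟩
        rintro z ⟨hz1, -⟩
        exact (scNone z).1 hz1
      | some i =>
        obtain ⟨w, ⟨hw1, hw2⟩, huniq⟩ := existsUnique_mindist τ i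
        refine ⟨some w, ⟨(scSome i w).2 hw1, Or.inr ⟨w, rfl, hw2⟩⟩, ?_⟩
        rintro z ⟨hz1, hz2⟩
        rcases hz2 with rfl | ⟨j, rfl, hj⟩
        · exact absurd ((scNone _).1 hz1.symm) (by simp)
        · rw [huniq j ⟨(scSome i j).1 hz1, hj⟩]
    rw [prod_transversal τ.optionCongr _
      (fun x y h => central_cycleProdAt_sameCycle f hf a' τ.optionCongr h)
      _ q (existsUnique_mindist τ.optionCongr) hq]
    rw [Fintype.prod_option]
    have hqnone : q none := Or.inl rfl
    have hGnone : f (cycleProdAt a' τ.optionCongr none) = f d := by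
      have hfix : Function.minimalPeriod (⇑(τ.optionCongr : Perm (Option ι))) none = 1 := by
        rw [Function.minimalPeriod_eq_one_iff_isFixedPt]
        show τ.optionCongr none = none
        rfl
      unfold cycleProdAt
      rw [hfix, show List.range 1 = [0] from rfl, List.map_singleton, List.prod_singleton, pow_zero]
      rfl
    rw [if_pos hqnone, hGnone]
    congr 1
    refine Finset.prod_congr rfl ?_
    intro i _
    have hqi : q (some i) ↔ mindist τ i := by
      simp [hqdef]
    have hGi : cycleProdAt a' τ.optionCongr (some i) = cycleProdAt a τ i := by
      exact cycleProdAt_eq_of_iterates τ τ.optionCongr some a a' i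
        (fun k => hpow_some τ k i)
        (fun k hk => Option.some_injective ι (by rw [← hpow_some τ k i]; exact hk))
        (fun k => rfl)
    rw [hGi]
    exact if_congr hqi rfl rfl
  -- ===================== the `some` part =====================
  have part_some : ∀ (i₀ : ι) (τ : Perm ι),
      (∏ x : Option ι,
        if mindist (Equiv.Perm.decomposeOption.symm (some i₀, τ)) x then
          f (cycleProdAt a' (Equiv.Perm.decomposeOption.symm (some i₀, τ)) x) else 1)
        = ∏ j : ι, (if mindist τ j then
            f (cycleProdAt (Function.update a (τ⁻¹ i₀) (a (τ⁻¹ i₀) * d)) τ j) else 1) := by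
    intro i₀ τ
    set σ : Perm (Option ι) := Equiv.Perm.decomposeOption.symm (some i₀, τ) with hσdef
    set j₀ : ι := τ⁻¹ i₀ with hj₀def
    set u : ι → A := Function.update a j₀ (a j₀ * d) with hu
    have hσ_none : σ none = some i₀ := by
      show (Equiv.swap none (some i₀) * τ.optionCongr) none = some i₀
      rw [Equiv.Perm.mul_apply]
      show Equiv.swap none (some i₀) none = some i₀
      rw [Equiv.swap_apply_left]
    have hσ_some : ∀ j : ι, σ (some j) = if τ j = i₀ then none else some (τ j) := by
      intro j
      show (Equiv.swap none (some i₀) * τ.optionCongr) (some j) = _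
      rw [Equiv.Perm.mul_apply]
      show Equiv.swap none (some i₀) (some (τ j)) = _
      by_cases h : τ j = i₀
      · rw [if_pos h, h, Equiv.swap_apply_right]
      · rw [if_neg h, Equiv.swap_apply_of_ne_of_ne (by simp) (by simpa using h)]
    have S1 : ∀ (k : ℕ) (j : ι),
        ((σ ^ k) (some j) = none ∧ τ.SameCycle j i₀) ∨
          (∃ j', (σ ^ k) (some j) = some j' ∧ τ.SameCycle j j') := by
      intro k
      induction k with
      | zero => intro j; exact Or.inr ⟨j, rfl, Equiv.Perm.SameCycle.refl _ _⟩
      | succ k ih =>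
        intro j
        rcases ih j with ⟨he, hsc⟩ | ⟨j', he, hsc⟩
        · rw [pow_succ_apply, he, hσ_none]
          exact Or.inr ⟨i₀, rfl, hsc⟩
        · rw [pow_succ_apply, he, hσ_some]
          by_cases h : τ j' = i₀
          · rw [if_pos h]
            exact Or.inl ⟨rfl, hsc.trans ⟨1, by rw [zpow_one]; exact h⟩⟩
          · rw [if_neg h]
            exact Or.inr ⟨τ j', rfl, hsc.trans (sameCycle_of_apply τ j')⟩
    have S2 : ∀ j j' : ι, σ.SameCycle (some j) (some j') → τ.SameCycle j j' := by
      intro j j' h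
      obtain ⟨m, -, hm⟩ := h.exists_pow_eq'
      rcases S1 m j with ⟨he, -⟩ | ⟨j'', he, hsc⟩
      · rw [hm] at he; exact absurd he (by simp)
      · rw [hm] at he
        rwa [Option.some_injective ι he.symm] at hsc
    have S3 : ∀ j : ι, σ.SameCycle (some j) none → τ.SameCycle j i₀ := by
      intro j h
      obtain ⟨m, -, hm⟩ := h.exists_pow_eq'
      rcases S1 m j with ⟨-, hsc⟩ | ⟨j'', he, -⟩
      · exact hsc
      · rw [hm] at he; exact absurd he.symm (by simp)
    have hstep : ∀ j : ι, σ.SameCycle (some j) (some (τ j)) := by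
      intro j
      by_cases h : τ j = i₀
      · have h1 : σ.SameCycle (some j) none := ⟨1, by rw [zpow_one, hσ_some, if_pos h]⟩
        have h2 : σ.SameCycle (none : Option ι) (some i₀) := ⟨1, by rw [zpow_one, hσ_none]⟩
        rw [h]
        exact h1.trans h2
      · exact ⟨1, by rw [zpow_one, hσ_some, if_neg h]⟩
    have S4 : ∀ j j' : ι, τ.SameCycle j j' → σ.SameCycle (some j) (some j') := by
      intro j j' h
      obtain ⟨m, -, hm⟩ := h.exists_pow_eq'
      subst hm
      clear h
      induction m with
      | zero => exact Equiv.Perm.SameCycle.refl _ _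
      | succ m ih =>
        rw [pow_succ_apply]
        exact ih.trans (hstep _)
    have S5 : ∀ j : ι, τ.SameCycle i₀ j → σ.SameCycle none (some j) := by
      intro j h
      have h0 : σ.SameCycle none (some i₀) := ⟨1, by rw [zpow_one, hσ_none]⟩
      exact Equiv.Perm.SameCycle.trans h0 (S4 i₀ j h)
    set qq : Option ι → Prop := fun x => ∃ j, x = some j ∧ mindist τ j with hqqdef
    have hqq : ∀ x, ∃! y, σ.SameCycle x y ∧ qq y := by
      intro x
      match x with
      | some i =>
        obtain ⟨w, ⟨hw1, hw2⟩, huniq⟩ := existsUnique_mindist τ i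
        refine ⟨some w, ⟨S4 i w hw1, ⟨w, rfl, hw2⟩⟩, ?_⟩
        rintro z ⟨hz1, j, rfl, hj⟩
        rw [huniq j ⟨S2 i j hz1, hj⟩]
      | none =>
        obtain ⟨w, ⟨hw1, hw2⟩, huniq⟩ := existsUnique_mindist τ i₀
        refine ⟨some w, ⟨S5 w hw1, ⟨w, rfl, hw2⟩⟩, ?_⟩
        rintro z ⟨hz1, j, rfl, hj⟩
        rw [huniq j ⟨(S3 j hz1.symm).symm, hj⟩]
    rw [prod_transversal σ _
      (fun x y h => central_cycleProdAt_sameCycle f hf a' σ h)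
      _ qq (existsUnique_mindist σ) hqq]
    rw [Fintype.prod_option]
    have hqqnone : ¬ qq none := by
      rintro ⟨j, hj, -⟩
      cases hj
    rw [if_neg hqqnone, one_mul]
    refine Finset.prod_congr rfl ?_
    intro j _
    have hqqj : qq (some j) ↔ mindist τ j := by
      simp [hqqdef]
    have hval : f (cycleProdAt a' σ (some j)) = f (cycleProdAt u τ j) := by
      by_cases hc : τ.SameCycle j i₀
      · -- rotate both to canonical points
        have h1 : f (cycleProdAt a' σ (some j)) = f (cycleProdAt a' σ none) :=
          central_cycleProdAt_sameCycle f hf a' σ ((S5 j hc.symm).symm)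
        have h2 : f (cycleProdAt u τ i₀) = f (cycleProdAt u τ j) :=
          central_cycleProdAt_sameCycle f hf u τ hc.symm
        rw [h1, ← h2]
        -- key computation
        obtain ⟨T', hT⟩ : ∃ T', Function.minimalPeriod (⇑τ) i₀ = T' + 1 :=
          ⟨_, (Nat.succ_pred_eq_of_pos (minimalPeriod_pos τ i₀)).symm⟩
        have K1 : ∀ m : ℕ, m ≤ T' → (σ ^ (m + 1)) none = some ((τ ^ m) i₀) := by
          intro m
          induction m with
          | zero => intro _; rw [pow_one, hσ_none]; simp
          | succ m ih =>
            intro hm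
            rw [pow_succ_apply, ih (by omega), hσ_some]
            have hne : τ ((τ ^ m) i₀) ≠ i₀ := by
              rw [← pow_succ_apply]
              intro he
              have := pow_apply_injOn τ i₀ (j := m + 1) (k := 0)
                (by omega) (by omega) (by rw [he]; simp)
              omega
            rw [if_neg hne, ← pow_succ_apply]
        have hj₀' : (τ ^ T') i₀ = j₀ := by
          apply τ.injective
          rw [← pow_succ_apply, ← hT]
          have : (τ ^ Function.minimalPeriod (⇑τ) i₀) i₀ = i₀ := by
            have := Function.iterate_minimalPeriod (f := ⇑τ) (x := i₀)
            rwa [← Equiv.Perm.coe_pow] at this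
          rw [this, hj₀def]
          exact (τ.apply_symm_apply i₀).symm
        have K2 : Function.minimalPeriod (⇑σ) none = T' + 2 := by
          have hper : (σ ^ (T' + 2)) none = none := by
            rw [pow_succ_apply, K1 T' le_rfl, hj₀', hσ_some]
            rw [if_pos (show τ (τ⁻¹ i₀) = i₀ from τ.apply_symm_apply i₀)]
          apply le_antisymm
          · apply Function.IsPeriodicPt.minimalPeriod_le (by omega)
            show (⇑σ)^[T' + 2] none = none
            rw [← Equiv.Perm.coe_pow]
            exact hper
          · by_contra hlt
            push_neg at hlt
            set P := Function.minimalPeriod (⇑σ) none with hP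
            have hPpos : 0 < P := minimalPeriod_pos σ none
            have hPper : (σ ^ P) none = none := by
              have := Function.iterate_minimalPeriod (f := ⇑σ) (x := none)
              rwa [← Equiv.Perm.coe_pow] at this
            have : (σ ^ ((P - 1) + 1)) none = some ((τ ^ (P - 1)) i₀) :=
              K1 (P - 1) (by omega)
            rw [show P - 1 + 1 = P by omega, hPper] at this
            cases this
        have K3 : cycleProdAt a' σ none =
            d * ((List.range (T' + 1)).map (fun m => a ((τ ^ m) i₀))).prod := by
          unfold cycleProdAt
          rw [K2, show T' + 2 = (T' + 1) + 1 from rfl, List.range_succ_eq_map,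
            List.map_cons, List.map_map, List.prod_cons]
          congr 1
          refine congrArg List.prod ?_
          apply List.map_congr_left
          intro m hm
          rw [List.mem_range] at hm
          show a' ((σ ^ (m + 1)) none) = a ((τ ^ m) i₀)
          rw [K1 m (by omega)]
          rfl
        have K4 : cycleProdAt u τ i₀ =
            ((List.range T').map (fun m => a ((τ ^ m) i₀))).prod * (a j₀ * d) := by
          unfold cycleProdAt
          rw [hT, show T' + 1 = T'.succ from rfl, List.range_succ, List.map_append,
            List.prod_append, List.map_singleton, List.prod_singleton]
          congr 1
          · congr 1
            apply List.map_congr_left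
            intro m hm
            rw [List.mem_range] at hm
            show u ((τ ^ m) i₀) = a ((τ ^ m) i₀)
            rw [hu]
            apply Function.update_of_ne
            rw [← hj₀']
            intro he
            have := pow_apply_injOn τ i₀ (j := m) (k := T')
              (by omega) (by omega) he
            omega
          · rw [hj₀', hu, Function.update_self]
        have K5 : ((List.range (T' + 1)).map (fun m => a ((τ ^ m) i₀))).prod =
            ((List.range T').map (fun m => a ((τ ^ m) i₀))).prod * a j₀ := by
          rw [show T' + 1 = T'.succ from rfl, List.range_succ, List.map_append,
            List.prod_append, List.map_singleton, List.prod_singleton, hj₀']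
        rw [K3, K4, K5]
        calc f (d * (((List.range T').map (fun m => a ((τ ^ m) i₀))).prod * a j₀))
            = f ((((List.range T').map (fun m => a ((τ ^ m) i₀))).prod * a j₀) * d) := hf _ _
          _ = f (((List.range T').map (fun m => a ((τ ^ m) i₀))).prod * (a j₀ * d)) := by
              rw [mul_assoc]
      · -- the cycle of j avoids i₀
        have hk : ∀ k : ℕ, (σ ^ k) (some j) = some ((τ ^ k) j) := by
          intro k
          induction k with
          | zero => simp
          | succ k ih =>
            rw [pow_succ_apply, ih, hσ_some]
            have hne : τ ((τ ^ k) j) ≠ i₀ := by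
              intro he
              exact hc ⟨((k + 1 : ℕ) : ℤ), by rw [zpow_natCast, pow_succ_apply]; exact he⟩
            rw [if_neg hne, ← pow_succ_apply]
        have : cycleProdAt a' σ (some j) = cycleProdAt u τ j := by
          apply cycleProdAt_eq_of_iterates τ σ some u a' j hk
            (fun k hk2 => Option.some_injective ι (by rw [← hk k]; exact hk2))
          intro k
          show a ((τ ^ k) j) = u ((τ ^ k) j)
          rw [hu]
          rw [Function.update_of_ne]
          intro he
          apply hc
          have : τ.SameCycle j j₀ := ⟨k, by rw [zpow_natCast]; exact he⟩
          exact this.trans ⟨1, by rw [zpow_one, hj₀def]; exact τ.apply_symm_apply i₀⟩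
        rw [this]
    rw [hval]
    exact if_congr hqqj rfl rfl
  -- ===================== assembling =====================
  have sign_some : ∀ (i₀ : ι) (τ : Perm ι),
      (Equiv.Perm.sign (Equiv.Perm.decomposeOption.symm (some i₀, τ)) : ℤ) =
        -(Equiv.Perm.sign τ : ℤ) := by
    intro i₀ τ
    show (Equiv.Perm.sign (Equiv.swap none (some i₀) * τ.optionCongr) : ℤ) = _
    rw [Equiv.Perm.sign_mul, Equiv.Perm.sign_swap (by simp), Equiv.optionCongr_sign]
    push_cast
    ring
  rw [sub_eq_add_neg]
  congr 1
  · -- none part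
    rw [frob_def, Finset.mul_sum]
    refine Finset.sum_congr rfl ?_
    intro τ _
    rw [hnone_eq τ, Equiv.optionCongr_sign, part_none τ, mul_smul_comm]
  · -- some part
    rw [Finset.sum_comm]
    have inner : ∀ τ : Perm ι,
        (∑ i₀ : ι, (Equiv.Perm.sign (Equiv.Perm.decomposeOption.symm (some i₀, τ)) : ℤ) •
          ∏ x : Option ι, if mindist (Equiv.Perm.decomposeOption.symm (some i₀, τ)) x then
            f (cycleProdAt a' (Equiv.Perm.decomposeOption.symm (some i₀, τ)) x) else 1)
        = ∑ j₀ : ι, (-(Equiv.Perm.sign τ : ℤ)) •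
            ∏ j : ι, (if mindist τ j then
              f (cycleProdAt (Function.update a j₀ (a j₀ * d)) τ j) else 1) := by
      intro τ
      rw [← Fintype.sum_equiv (τ : Equiv.Perm ι)
        (fun j₀ => (-(Equiv.Perm.sign τ : ℤ)) •
          ∏ j : ι, (if mindist τ j then
            f (cycleProdAt (Function.update a j₀ (a j₀ * d)) τ j) else 1))
        (fun i₀ => (Equiv.Perm.sign (Equiv.Perm.decomposeOption.symm (some i₀, τ)) : ℤ) •
          ∏ x : Option ι, if mindist (Equiv.Perm.decomposeOption.symm (some i₀, τ)) x then
            f (cycleProdAt a' (Equiv.Perm.decomposeOption.symm (some i₀, τ)) x) else 1)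
        ?_]
      intro j₀
      rw [sign_some (τ j₀) τ, part_some (τ j₀) τ, show τ⁻¹ (τ j₀) = j₀ from τ.symm_apply_apply j₀]
    rw [Finset.sum_congr rfl (fun τ _ => inner τ)]
    rw [Finset.sum_comm, ← Finset.sum_neg_distrib]
    refine Finset.sum_congr rfl ?_
    intro j₀ _
    rw [frob_def, ← Finset.sum_neg_distrib]
    refine Finset.sum_congr rfl ?_
    intro τ _
    rw [neg_smul]

end CProd

section Fiber
variable {n : ℕ}

theorem fiber_eq (hn : 1 ≤ n) (ω : Finset (Finset ℕ))
    (hω : IsSetPartition (Finset.Icc 1 (n - 1)) ω) :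
    ((Finset.Icc 1 n).powerset.powerset).filter
        (fun π => IsSetPartition (Finset.Icc 1 n) π ∧ delPart n π = ω)
      = insert (insert {n} ω) (ω.image (fun Q => insert (insert n Q) (ω.erase Q))) := by
  obtain ⟨hne, hdisj, hcup⟩ := hω
  have hQsub : ∀ Q ∈ ω, Q ⊆ Finset.Icc 1 (n - 1) := by
    intro Q hQ x hx
    rw [← hcup]
    exact mem_biUnion.mpr ⟨Q, hQ, hx⟩
  have hQn : ∀ Q ∈ ω, n ∉ Q := by
    intro Q hQ hxn
    have := hQsub Q hQ hxn
    rw [mem_Icc] at this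
    omega
  have hIccsub : Finset.Icc 1 (n - 1) ⊆ Finset.Icc 1 n := by
    apply Icc_subset_Icc le_rfl
    omega
  have hIcc : Finset.Icc 1 n = insert n (Finset.Icc 1 (n - 1)) := by
    ext x
    simp only [mem_Icc, mem_insert]
    omega
  have hEmpty : (∅ : Finset ℕ) ∉ ω := fun h => absurd (hne ∅ h) (by simp)
  ext π
  simp only [mem_filter, mem_powerset, mem_insert, mem_image]
  constructor
  · rintro ⟨-, ⟨hπne, hπdisj, hπcup⟩, hdel⟩
    have hnmem : n ∈ π.biUnion id := by rw [hπcup, mem_Icc]; omega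
    obtain ⟨P, hP, hnP⟩ := mem_biUnion.mp hnmem
    have hnP : n ∈ P := hnP
    have himg : π.image (fun R => R.erase n) = insert (P.erase n) (π.erase P) := by
      conv_lhs => rw [← insert_erase hP]
      rw [image_insert]
      congr 1
      rw [show (π.erase P).image (fun R => R.erase n) = (π.erase P).image id from
        image_congr (fun R hR => erase_eq_of_notMem (fun hnR =>
          (disjoint_left.mp (hπdisj R (mem_of_mem_erase hR) P hP (ne_of_mem_erase hR))) hnR hnP)),
        image_id]
    have hEπ : (∅ : Finset ℕ) ∉ π.erase P := fun h =>
      absurd (hπne ∅ (mem_of_mem_erase h)) (by simp)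
    by_cases hPn : P = {n}
    · left
      subst hPn
      have hthis : delPart n π = π.erase {n} := by
        unfold delPart
        rw [himg, erase_singleton, erase_insert hEπ]
      rw [hthis] at hdel
      rw [← hdel, insert_erase hP]
    · right
      have hQne : P.erase n ≠ ∅ := by
        intro h
        rcases (erase_eq_empty_iff P n).mp h with h' | h'
        · exact absurd (h' ▸ hnP) (notMem_empty n)
        · exact hPn h'
      have hdel2 : delPart n π = insert (P.erase n) (π.erase P) := by
        unfold delPart
        rw [himg, erase_insert_of_ne hQne, erase_eq_of_notMem hEπ]
      rw [hdel2] at hdel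
      refine ⟨P.erase n, ?_, ?_⟩
      · rw [← hdel]; exact mem_insert_self _ _
      · have hQnotin : P.erase n ∉ π.erase P := by
          intro h
          have hsub : P.erase n ⊆ P := erase_subset _ _
          have hd := hπdisj _ (mem_of_mem_erase h) P hP (ne_of_mem_erase h)
          obtain ⟨x, hx⟩ := nonempty_iff_ne_empty.mpr hQne
          exact (disjoint_left.mp hd) hx (hsub hx)
        rw [← hdel, erase_insert hQnotin, insert_erase hnP, insert_erase hP]
  · rintro (rfl | ⟨Q, hQ, rfl⟩)
    · -- π = insert {n} ω
      refine ⟨?_, ⟨?_, ?_, ?_⟩, ?_⟩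
      · intro P hP
        rw [mem_powerset]
        rcases mem_insert.mp hP with rfl | hP'
        · rw [singleton_subset_iff, mem_Icc]; omega
        · exact (hQsub P hP').trans hIccsub
      · intro P hP
        rcases mem_insert.mp hP with rfl | hP'
        · exact singleton_nonempty n
        · exact hne P hP'
      · intro P hP R hR hPR
        rcases mem_insert.mp hP with rfl | hP' <;> rcases mem_insert.mp hR with rfl | hR'
        · exact absurd rfl hPR
        · exact disjoint_singleton_left.mpr (hQn R hR')
        · exact (disjoint_singleton_left.mpr (hQn P hP')).symm
        · exact hdisj P hP' R hR' hPR
      · rw [biUnion_insert, hcup]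
        show {n} ∪ _ = _
        rw [hIcc]
        ext x
        simp [Finset.mem_union]
      · unfold delPart
        rw [image_insert, erase_singleton,
          show ω.image (fun R => R.erase n) = ω.image id from
            image_congr (fun R hR => erase_eq_of_notMem (hQn R hR)),
          image_id, erase_insert hEmpty]
    · -- π = insert (insert n Q) (ω.erase Q)
      have hnQ : n ∉ Q := hQn Q hQ
      have hbi : Q ∪ (ω.erase Q).biUnion id = ω.biUnion id := by
        conv_rhs => rw [← insert_erase hQ]
        rw [biUnion_insert]
        rfl
      refine ⟨?_, ⟨?_, ?_, ?_⟩, ?_⟩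
      · intro P hP
        rw [mem_powerset]
        rcases mem_insert.mp hP with rfl | hP'
        · rw [insert_subset_iff]
          exact ⟨by rw [mem_Icc]; omega, (hQsub Q hQ).trans hIccsub⟩
        · exact (hQsub P (mem_of_mem_erase hP')).trans hIccsub
      · intro P hP
        rcases mem_insert.mp hP with rfl | hP'
        · exact insert_nonempty n Q
        · exact hne P (mem_of_mem_erase hP')
      · intro P hP R hR hPR
        rcases mem_insert.mp hP with rfl | hP' <;> rcases mem_insert.mp hR with rfl | hR'
        · exact absurd rfl hPR
        · rw [disjoint_insert_left]
          refine ⟨hQn R (mem_of_mem_erase hR'), ?_⟩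
          exact hdisj Q hQ R (mem_of_mem_erase hR') (Ne.symm (ne_of_mem_erase hR'))
        · rw [disjoint_insert_right]
          refine ⟨hQn P (mem_of_mem_erase hP'), ?_⟩
          exact hdisj P (mem_of_mem_erase hP') Q hQ (ne_of_mem_erase hP')
        · exact hdisj P (mem_of_mem_erase hP') R (mem_of_mem_erase hR') hPR
      · rw [biUnion_insert]
        show insert n Q ∪ _ = _
        rw [insert_union, hbi, hcup, ← hIcc]
      · unfold delPart
        rw [image_insert, erase_insert hnQ,
          show (ω.erase Q).image (fun R => R.erase n) = (ω.erase Q).image id from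
            image_congr (fun R hR => erase_eq_of_notMem (hQn R (mem_of_mem_erase hR))),
          image_id, insert_erase hQ, erase_eq_of_notMem hEmpty]

theorem pi0_not_mem (hn : 1 ≤ n) (ω : Finset (Finset ℕ))
    (hω : IsSetPartition (Finset.Icc 1 (n - 1)) ω) :
    insert {n} ω ∉ ω.image (fun Q => insert (insert n Q) (ω.erase Q)) := by
  obtain ⟨hne, hdisj, hcup⟩ := hω
  have hQn : ∀ Q ∈ ω, n ∉ Q := by
    intro Q hQ hxn
    have : n ∈ ω.biUnion id := mem_biUnion.mpr ⟨Q, hQ, hxn⟩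
    rw [hcup, mem_Icc] at this
    omega
  rintro h
  obtain ⟨Q, hQ, heq⟩ := mem_image.mp h
  have h1 : ({n} : Finset ℕ) ∈ insert (insert n Q) (ω.erase Q) := by
    rw [heq]; exact mem_insert_self _ _
  rcases mem_insert.mp h1 with h2 | h2
  · obtain ⟨x, hx⟩ := hne Q hQ
    have : x ∈ ({n} : Finset ℕ) := by rw [h2]; exact mem_insert_of_mem hx
    rw [mem_singleton] at this
    exact hQn Q hQ (this ▸ hx)
  · exact hQn {n} (mem_of_mem_erase h2) (mem_singleton_self n)

theorem piQ_inj (hn : 1 ≤ n) (ω : Finset (Finset ℕ))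
    (hω : IsSetPartition (Finset.Icc 1 (n - 1)) ω) :
    ∀ Q1 ∈ ω, ∀ Q2 ∈ ω,
      insert (insert n Q1) (ω.erase Q1) = insert (insert n Q2) (ω.erase Q2) → Q1 = Q2 := by
  obtain ⟨hne, hdisj, hcup⟩ := hω
  have hQn : ∀ Q ∈ ω, n ∉ Q := by
    intro Q hQ hxn
    have : n ∈ ω.biUnion id := mem_biUnion.mpr ⟨Q, hQ, hxn⟩
    rw [hcup, mem_Icc] at this
    omega
  intro Q1 hQ1 Q2 hQ2 heq
  have h1 : insert n Q1 ∈ insert (insert n Q2) (ω.erase Q2) := by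
    rw [← heq]; exact mem_insert_self _ _
  rcases mem_insert.mp h1 with h2 | h2
  · have := congrArg (fun s => s.erase n) h2
    simpa [erase_insert (hQn Q1 hQ1), erase_insert (hQn Q2 hQ2)] using this
  · exact absurd (mem_insert_self n Q1) (hQn _ (mem_of_mem_erase h2))

end Fiber
end Aux13

open Finset in
set_option maxHeartbeats 1600000 in
/-- For a set partition `ω = {Q₁,…,Q_ℓ}` of `[n−1]`, the sum of `f_k(b_{P₁},…,b_{P_k})`
over all set partitions `π` of `[n]` with `del π = ω` equals
`f(g(aₙ)) · f_ℓ(b_{Q₁},…,b_{Q_ℓ}) − ∑_{i=1}^{n-1} f_ℓ(b_{Q₁}^{(i)},…,b_{Q_ℓ}^{(i)})`. -/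
theorem stmt13 {A B C : Type*} [Ring A] [CommRing B] [CommRing C]
    (g : A →ₗ[ℤ] B) (f : B →ₗ[ℤ] C) (hg : Central g) (hf : Central f)
    (n : ℕ) (hn : 2 ≤ n) (a : ℕ → A)
    (ω : Finset (Finset ℕ)) (hω : IsSetPartition (Finset.Icc 1 (n - 1)) ω) :
    (∑ π ∈ ((Finset.Icc 1 n).powerset.powerset).filter
        (fun π => IsSetPartition (Finset.Icc 1 n) π ∧ delPart n π = ω),
      frob f (fun P : {P // P ∈ π} =>
        frob g (fun x : {x // x ∈ P.1} => a x.1)))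
      = f (g (a n)) *
          frob f (fun Q : {Q // Q ∈ ω} =>
            frob g (fun x : {x // x ∈ Q.1} => a x.1))
        - ∑ i ∈ Finset.Icc 1 (n - 1),
            frob f (fun Q : {Q // Q ∈ ω} =>
              frob g (fun x : {x // x ∈ Q.1} =>
                Function.update a i (a i * a n) x.1)) := by
  have hn1 : 1 ≤ n := by omega
  have hne := hω.1
  have hdisj := hω.2.1
  have hcup := hω.2.2
  have hQn : ∀ Q ∈ ω, n ∉ Q := by
    intro Q hQ hxn
    have : n ∈ ω.biUnion id := mem_biUnion.mpr ⟨Q, hQ, hxn⟩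
    rw [hcup, mem_Icc] at this
    omega
  set b : {Q // Q ∈ ω} → B := fun Q => frob g (fun x : {x // x ∈ Q.1} => a x.1) with hb
  -- the fiber of `delPart` over `ω`
  rw [Aux13.fiber_eq hn1 ω hω, Finset.sum_insert (Aux13.pi0_not_mem hn1 ω hω),
    Finset.sum_image (Aux13.piQ_inj hn1 ω hω)]
  -- value of `g` on the singleton block {n}
  have hdval : frob g (fun x : {x // x ∈ ({n} : Finset ℕ)} => a x.1) = g (a n) := by
    let e2 : PUnit.{1} ≃ {x // x ∈ ({n} : Finset ℕ)} :=
    { toFun := fun _ => ⟨n, mem_singleton_self n⟩,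
      invFun := fun _ => PUnit.unit,
      left_inv := fun _ => rfl,
      right_inv := by
        rintro ⟨x, hx⟩
        have := mem_singleton.mp hx
        subst this
        rfl }
    rw [← Aux13.frob_comp_equiv g hg _ e2, Aux13.frob_unique]
    rfl
  -- the term of the partition π₀ = insert {n} ω
  have hterm0 : frob f (fun P : {P // P ∈ insert {n} ω} =>
        frob g (fun x : {x // x ∈ P.1} => a x.1))
      = f (g (a n)) * frob f b -
          ∑ Q : {Q // Q ∈ ω}, frob f (Function.update b Q (b Q * g (a n))) := by
    have hsing : ({n} : Finset ℕ) ∉ ω := fun h => (hQn _ h) (mem_singleton_self n)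
    let e : Option {Q // Q ∈ ω} ≃ {P // P ∈ insert {n} ω} :=
    { toFun := fun o => o.elim ⟨{n}, mem_insert_self _ _⟩
        (fun Q => ⟨Q.1, mem_insert_of_mem Q.2⟩),
      invFun := fun P => if h : P.1 = {n} then none
        else some ⟨P.1, (mem_insert.mp P.2).resolve_left h⟩,
      left_inv := by
        rintro (_ | ⟨Q, hQ⟩)
        · simp
        · have hne' : Q ≠ {n} := fun hh => hsing (hh ▸ hQ)
          simp [hne']
      right_inv := by
        rintro ⟨P, hP⟩
        by_cases h : P = {n}
        · subst h; simp
        · simp [h] }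
    have h1 : frob f (fun P : {P // P ∈ insert {n} ω} =>
          frob g (fun x : {x // x ∈ P.1} => a x.1))
        = frob f (fun o : Option {Q // Q ∈ ω} => o.elim (g (a n)) b) := by
      rw [← Aux13.frob_comp_equiv f hf
        (fun P : {P // P ∈ insert {n} ω} => frob g (fun x : {x // x ∈ P.1} => a x.1)) e]
      congr 1
      funext o
      rcases o with _ | Q
      · exact hdval
      · rfl
    rw [h1, Aux13.frob_option f hf b (g (a n))]
  -- the term of the partition π_Q for a block Q of ω
  have htermQ : ∀ Q : {Q // Q ∈ ω},
      frob f (fun P : {P // P ∈ insert (insert n Q.1) (ω.erase Q.1)} =>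
        frob g (fun x : {x // x ∈ P.1} => a x.1))
      = frob f (Function.update b Q (b Q * g (a n)))
        - ∑ i ∈ Q.1, frob f (fun Q' : {Q' // Q' ∈ ω} =>
            frob g (fun x : {x // x ∈ Q'.1} =>
              Function.update a i (a i * a n) x.1)) := by
    rintro ⟨Q, hQ⟩
    have hnQ : n ∉ Q := hQn Q hQ
    have hinsnot : insert n Q ∉ ω := fun h => hQn _ h (mem_insert_self n Q)
    set vQ : B := frob g (fun x : {x // x ∈ insert n Q} => a x.1) with hvQ
    have stepA : frob f (fun P : {P // P ∈ insert (insert n Q) (ω.erase Q)} =>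
        frob g (fun x : {x // x ∈ P.1} => a x.1))
        = frob f (Function.update b ⟨Q, hQ⟩ vQ) := by
      let e3 : {Q' // Q' ∈ ω} ≃ {P // P ∈ insert (insert n Q) (ω.erase Q)} :=
      { toFun := fun Q' => if h : Q'.1 = Q then ⟨insert n Q, mem_insert_self _ _⟩
          else ⟨Q'.1, mem_insert_of_mem (mem_erase.mpr ⟨h, Q'.2⟩)⟩,
        invFun := fun P => if h : P.1 = insert n Q then ⟨Q, hQ⟩
          else ⟨P.1, mem_of_mem_erase ((mem_insert.mp P.2).resolve_left h)⟩,
        left_inv := by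
          rintro ⟨Q', hQ'⟩
          by_cases h : Q' = Q
          · subst h; simp
          · have h2 : Q' ≠ insert n Q := fun hh => hinsnot (hh ▸ hQ')
            simp [h, h2]
        right_inv := by
          rintro ⟨P, hP⟩
          by_cases h : P = insert n Q
          · subst h; simp
          · have h2 : P ∈ ω.erase Q := (mem_insert.mp hP).resolve_left h
            have h3 : P ≠ Q := (mem_erase.mp h2).1
            simp [h, h3] }
      rw [← Aux13.frob_comp_equiv f hf
        (fun P : {P // P ∈ insert (insert n Q) (ω.erase Q)} =>
          frob g (fun x : {x // x ∈ P.1} => a x.1)) e3]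
      congr 1
      funext Q'
      by_cases h : Q' = (⟨Q, hQ⟩ : {Q' // Q' ∈ ω})
      · subst h
        rw [Function.update_self]
        have he : e3 ⟨Q, hQ⟩ = ⟨insert n Q, mem_insert_self _ _⟩ := by
          show dite _ _ _ = _
          rw [dif_pos rfl]
        exact congrArg (fun P : {P // P ∈ insert (insert n Q) (ω.erase Q)} =>
          frob g (fun x : {x // x ∈ P.1} => a x.1)) he
      · rw [Function.update_of_ne h]
        have hne2 : Q'.1 ≠ Q := fun hh => h (Subtype.ext hh)
        have he : e3 Q' = ⟨Q'.1, mem_insert_of_mem (mem_erase.mpr ⟨hne2, Q'.2⟩)⟩ := by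
          show dite _ _ _ = _
          rw [dif_neg hne2]
        exact congrArg (fun P : {P // P ∈ insert (insert n Q) (ω.erase Q)} =>
          frob g (fun x : {x // x ∈ P.1} => a x.1)) he
    have stepB : vQ = g (a n) * b ⟨Q, hQ⟩ - ∑ x : {x // x ∈ Q},
        frob g (fun y : {y // y ∈ Q} =>
          Function.update a x.1 (a x.1 * a n) y.1) := by
      let e4 : Option {x // x ∈ Q} ≃ {x // x ∈ insert n Q} :=
      { toFun := fun o => o.elim ⟨n, mem_insert_self _ _⟩
          (fun x => ⟨x.1, mem_insert_of_mem x.2⟩),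
        invFun := fun x => if h : x.1 = n then none
          else some ⟨x.1, (mem_insert.mp x.2).resolve_left h⟩,
        left_inv := by
          rintro (_ | ⟨x, hx⟩)
          · simp
          · have hne' : x ≠ n := fun hh => hnQ (hh ▸ hx)
            simp [hne']
        right_inv := by
          rintro ⟨x, hx⟩
          by_cases h : x = n
          · subst h; simp
          · simp [h] }
      have h4 : vQ = frob g (fun o : Option {x // x ∈ Q} =>
          o.elim (a n) (fun x : {x // x ∈ Q} => a x.1)) := by
        rw [hvQ, ← Aux13.frob_comp_equiv g hg
          (fun x : {x // x ∈ insert n Q} => a x.1) e4]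
        congr 1
        funext o
        rcases o with _ | x <;> rfl
      rw [h4, Aux13.frob_option g hg (fun x : {x // x ∈ Q} => a x.1) (a n)]
      congr 1
      refine Finset.sum_congr rfl ?_
      intro x _
      congr 1
      funext y
      have := congrFun (Function.update_comp_eq_of_injective a
        (Subtype.val_injective (p := fun z => z ∈ Q)) x (a x.1 * a n)) y
      exact this.symm
    rw [stepA, stepB]
    let H : B →+ C := AddMonoidHom.mk'
      (fun c => frob f (Function.update b ⟨Q, hQ⟩ c))
      (fun u v => Aux13.frob_update_add f b ⟨Q, hQ⟩ u v)
    have hH : ∀ c, frob f (Function.update b ⟨Q, hQ⟩ c) = H c := fun c => rfl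
    rw [hH, map_sub, map_sum]
    congr 1
    · rw [← hH, mul_comm]
    · rw [← Finset.sum_coe_sort Q (fun i =>
        frob f (fun Q' : {Q' // Q' ∈ ω} =>
          frob g (fun x : {x // x ∈ Q'.1} => Function.update a i (a i * a n) x.1)))]
      refine Finset.sum_congr rfl ?_
      intro x _
      rw [← hH]
      congr 1
      funext Q'
      by_cases h : Q' = (⟨Q, hQ⟩ : {Q' // Q' ∈ ω})
      · subst h
        rw [Function.update_self]
      · rw [Function.update_of_ne h]
        have hne2 : Q'.1 ≠ Q := fun hh => h (Subtype.ext hh)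
        refine congrArg (frob g) ?_
        funext y
        have hy : (y.1 : ℕ) ≠ x.1 := by
          intro hh
          have hd := hdisj Q'.1 Q'.2 Q hQ hne2
          exact (Finset.disjoint_left.mp hd) y.2 (hh ▸ x.2)
        exact (Function.update_of_ne hy _ a).symm
  -- assemble everything
  rw [hterm0]
  rw [← Finset.sum_coe_sort ω (fun Q =>
    frob f (fun P : {P // P ∈ insert (insert n Q) (ω.erase Q)} =>
      frob g (fun x : {x // x ∈ P.1} => a x.1)))]
  rw [Finset.sum_congr rfl (fun Q _ => htermQ Q), Finset.sum_sub_distrib]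
  have hdouble : (∑ Q : {Q // Q ∈ ω}, ∑ i ∈ Q.1,
      frob f (fun Q' : {Q' // Q' ∈ ω} =>
        frob g (fun x : {x // x ∈ Q'.1} =>
          Function.update a i (a i * a n) x.1)))
      = ∑ i ∈ Finset.Icc 1 (n - 1),
          frob f (fun Q' : {Q' // Q' ∈ ω} =>
            frob g (fun x : {x // x ∈ Q'.1} =>
              Function.update a i (a i * a n) x.1)) := by
    rw [Finset.sum_coe_sort ω (fun Q => ∑ i ∈ Q,
      frob f (fun Q' : {Q' // Q' ∈ ω} =>
        frob g (fun x : {x // x ∈ Q'.1} =>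
          Function.update a i (a i * a n) x.1)))]
    rw [← Finset.sum_biUnion (fun P hP R hR hPR => hdisj P hP R hR hPR),
      show (ω.biUnion fun i => i) = Finset.Icc 1 (n - 1) from hcup]
  rw [hdouble]
  ring
end
end

section
/- Let A be a ring and B a commutative ring, let n ∈ ℕ, and let f_1, f_2, …, f_n : A → B be nonunital ring homomorphisms. Then the sum f_1 + f_2 + ⋯ + f_n is an n-homomorphism. -/
open scoped Classical

noncomputable section

namespace Stmt15Aux

variable {ι : Type*} [Fintype ι] [DecidableEq ι]

/-- The "distinguished" predicate from the statement. -/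
def Dist (σ : Equiv.Perm ι) (x : ι) : Prop :=
  ∀ j : ℕ, (Fintype.equivFin ι) x ≤ (Fintype.equivFin ι) ((σ ^ j) x)

lemma minPeriod_pos (σ : Equiv.Perm ι) (x : ι) : 0 < Function.minimalPeriod (⇑σ) x := by
  have h : Function.IsPeriodicPt (⇑σ) (orderOf σ) x := by
    show (⇑σ)^[orderOf σ] x = x
    rw [← Equiv.Perm.coe_pow, pow_orderOf_eq_one]
    rfl
  exact h.minimalPeriod_pos (orderOf_pos σ)

lemma sameCycle_iff_pow {σ : Equiv.Perm ι} {x y : ι} :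
    σ.SameCycle x y ↔ ∃ j : ℕ, (σ ^ j) x = y := by
  constructor
  · intro h
    obtain ⟨j, _, hj⟩ := h.exists_pow_eq'
    exact ⟨j, hj⟩
  · rintro ⟨j, rfl⟩
    exact ⟨(j : ℤ), by rw [zpow_natCast]⟩

lemma sameCycle_iff_pow_lt {σ : Equiv.Perm ι} {x y : ι} :
    σ.SameCycle x y ↔ ∃ j < Function.minimalPeriod (⇑σ) x, (σ ^ j) x = y := by
  rw [sameCycle_iff_pow]
  constructor
  · rintro ⟨j, rfl⟩
    refine ⟨j % Function.minimalPeriod (⇑σ) x, Nat.mod_lt _ (minPeriod_pos σ x), ?_⟩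
    show (⇑σ)^[j % Function.minimalPeriod (⇑σ) x] x = (⇑σ)^[j] x
    exact Function.iterate_mod_minimalPeriod_eq
  · rintro ⟨j, _, hj⟩; exact ⟨j, hj⟩

/-- The orbit (cycle) of `y` under `σ` as a `Finset`. -/
def orbitF (σ : Equiv.Perm ι) (y : ι) : Finset ι :=
  Finset.univ.filter (σ.SameCycle y)

lemma mem_orbitF {σ : Equiv.Perm ι} {y x : ι} : x ∈ orbitF σ y ↔ σ.SameCycle y x := by
  simp [orbitF]

lemma orbitF_nonempty (σ : Equiv.Perm ι) (y : ι) : (orbitF σ y).Nonempty :=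
  ⟨y, mem_orbitF.mpr (Equiv.Perm.SameCycle.refl σ y)⟩

lemma orbitF_congr {σ : Equiv.Perm ι} {y z : ι} (h : σ.SameCycle y z) :
    orbitF σ y = orbitF σ z := by
  ext w
  simp only [mem_orbitF]
  exact ⟨fun hw => h.symm.trans hw, fun hw => h.trans hw⟩

lemma orbitF_eq_image (σ : Equiv.Perm ι) (x : ι) :
    orbitF σ x = (Finset.range (Function.minimalPeriod (⇑σ) x)).image (fun j => (σ ^ j) x) := by
  ext w
  simp only [mem_orbitF, Finset.mem_image, Finset.mem_range, sameCycle_iff_pow_lt]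

/-- The distinguished element of the orbit of `y`. -/
def distEl (σ : Equiv.Perm ι) (y : ι) : ι :=
  (Fintype.equivFin ι).symm
    (((orbitF σ y).image (Fintype.equivFin ι)).min'
      ((orbitF_nonempty σ y).image _))

lemma distEl_mem (σ : Equiv.Perm ι) (y : ι) : distEl σ y ∈ orbitF σ y := by
  have h := Finset.min'_mem ((orbitF σ y).image (Fintype.equivFin ι))
    ((orbitF_nonempty σ y).image _)
  obtain ⟨z, hz, hz'⟩ := Finset.mem_image.mp h
  have : distEl σ y = z := by
    rw [distEl, ← hz', Equiv.symm_apply_apply]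
  rwa [this]

lemma distEl_le {σ : Equiv.Perm ι} {y z : ι} (hz : z ∈ orbitF σ y) :
    (Fintype.equivFin ι) (distEl σ y) ≤ (Fintype.equivFin ι) z := by
  rw [distEl, Equiv.apply_symm_apply]
  exact Finset.min'_le _ _ (Finset.mem_image_of_mem _ hz)

lemma sameCycle_distEl (σ : Equiv.Perm ι) (y : ι) : σ.SameCycle y (distEl σ y) :=
  mem_orbitF.mp (distEl_mem σ y)

lemma distEl_congr {σ : Equiv.Perm ι} {y z : ι} (h : σ.SameCycle y z) :
    distEl σ y = distEl σ z := by
  have h2 : orbitF σ y = orbitF σ z := orbitF_congr h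
  simp only [distEl, h2]

lemma dist_distEl (σ : Equiv.Perm ι) (y : ι) : Dist σ (distEl σ y) := by
  intro j
  apply distEl_le
  rw [mem_orbitF]
  exact (sameCycle_distEl σ y).trans ⟨(j : ℤ), by rw [zpow_natCast]⟩

lemma Dist.eq_of_sameCycle {σ : Equiv.Perm ι} {x x' : ι} (hx : Dist σ x) (hx' : Dist σ x')
    (h : σ.SameCycle x x') : x = x' := by
  obtain ⟨j, hj⟩ := sameCycle_iff_pow.mp h
  obtain ⟨k, hk⟩ := sameCycle_iff_pow.mp h.symm
  have h1 := hx j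
  have h2 := hx' k
  rw [hj] at h1
  rw [hk] at h2
  exact (Fintype.equivFin ι).injective (le_antisymm h1 h2)

lemma distEl_eq_self {σ : Equiv.Perm ι} {x : ι} (h : Dist σ x) : distEl σ x = x :=
  (dist_distEl σ x).eq_of_sameCycle h (sameCycle_distEl σ x).symm

lemma distEl_eq_iff {σ : Equiv.Perm ι} {x y : ι} (hx : Dist σ x) :
    distEl σ y = x ↔ σ.SameCycle x y := by
  constructor
  · intro h
    exact (h ▸ (sameCycle_distEl σ y)).symm
  · intro h
    rw [distEl_congr h.symm, distEl_eq_self hx]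

lemma pow_injOn (σ : Equiv.Perm ι) (x : ι) :
    Set.InjOn (fun j => (σ ^ j) x) (Finset.range (Function.minimalPeriod (⇑σ) x)) := by
  intro i hi j hj hij
  simp only [Finset.coe_range, Set.mem_Iio] at hi hj
  exact Function.iterate_injOn_Iio_minimalPeriod hi hj hij

/-- Invariance of a cycle-constant function along cycles. -/
lemma invariant_of_comp {κ : Type*} {σ : Equiv.Perm ι} {g : ι → κ}
    (hg : ∀ y, g (σ y) = g y) : ∀ {y z : ι}, σ.SameCycle y z → g y = g z := by
  have key : ∀ (j : ℕ) (y : ι), g ((σ ^ j) y) = g y := by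
    intro j
    induction j with
    | zero => intro y; simp
    | succ j ih =>
      intro y
      rw [pow_succ]
      show g ((σ ^ j) (σ y)) = g y
      rw [ih (σ y), hg]
  intro y z h
  obtain ⟨j, rfl⟩ := sameCycle_iff_pow.mp h
  exact (key j y).symm


lemma map_list_prod {A B : Type*} [Ring A] [CommRing B] (f : A →ₗ[ℤ] B)
    (hf : ∀ a a', f (a * a') = f a * f a') (l : List A) (hl : l ≠ []) :
    f l.prod = (l.map f).prod := by
  induction l with
  | nil => exact absurd rfl hl
  | cons a l ih =>
    cases l with
    | nil => simp
    | cons b l =>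
      rw [List.prod_cons, hf, ih (by simp), List.map_cons (f := ⇑f) (a := a), List.prod_cons]

lemma list_range_prod {M : Type*} [CommMonoid M] (g : ℕ → M) (T : ℕ) :
    ((List.range T).map g).prod = ∏ j ∈ Finset.range T, g j := by
  induction T with
  | zero => simp
  | succ T ih =>
    rw [List.range_succ, List.map_append, List.prod_append, Finset.prod_range_succ, ih]
    simp

lemma f_cycleProdAt {A B : Type*} [Ring A] [CommRing B] (f : A →ₗ[ℤ] B)
    (hf : ∀ a a', f (a * a') = f a * f a') (a : ι → A) (σ : Equiv.Perm ι) (x : ι) :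
    f (cycleProdAt a σ x)
      = ∏ j ∈ Finset.range (Function.minimalPeriod (⇑σ) x), f (a ((σ ^ j) x)) := by
  have hne : ((List.range (Function.minimalPeriod (⇑σ) x)).map (fun j => a ((σ ^ j) x))) ≠ [] := by
    intro h
    have := congrArg List.length h
    simp [(minPeriod_pos σ x).ne'] at this
  rw [cycleProdAt, map_list_prod f hf _ hne, List.map_map, list_range_prod]
  rfl

omit [Fintype ι] [DecidableEq ι] in
lemma step1 {A B : Type*} [Ring A] [CommRing B] {n : ℕ} (fs : Fin n → (A →ₗ[ℤ] B))
    (hfs : ∀ i, ∀ a a' : A, fs i (a * a') = fs i a * fs i a') (a : Fin (n + 1) → A)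
    (σ : Equiv.Perm (Fin (n + 1))) :
    (∏ x : Fin (n + 1),
        if ∀ j : ℕ, (Fintype.equivFin (Fin (n + 1))) x ≤ (Fintype.equivFin (Fin (n + 1))) ((σ ^ j) x)
        then (∑ i, fs i) (cycleProdAt a σ x) else 1)
      = ∑ g ∈ Finset.univ.filter (fun g : Fin (n + 1) → Fin n => ∀ y, g (σ y) = g y),
          ∏ y, fs (g y) (a y) := by
  show (∏ x : Fin (n + 1), if Dist σ x then (∑ i, fs i) (cycleProdAt a σ x) else 1)
      = ∑ g ∈ Finset.univ.filter (fun g : Fin (n + 1) → Fin n => ∀ y, g (σ y) = g y),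
          ∏ y, fs (g y) (a y)
  set D : Finset (Fin (n + 1)) := Finset.univ.filter (Dist σ) with hD
  have hmem : ∀ y, distEl σ y ∈ D := fun y => by
    simp only [hD, Finset.mem_filter, Finset.mem_univ, true_and]
    exact dist_distEl σ y
  have hDist : ∀ x : Fin (n + 1), x ∈ D → Dist σ x := fun x hx => (Finset.mem_filter.mp hx).2
  have hfac : ∀ x, (∑ i, fs i) (cycleProdAt a σ x)
      = ∑ i : Fin n, ∏ j ∈ Finset.range (Function.minimalPeriod (⇑σ) x), fs i (a ((σ ^ j) x)) := by
    intro x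
    rw [LinearMap.sum_apply]
    exact Finset.sum_congr rfl fun i _ => f_cycleProdAt (fs i) (hfs i) a σ x
  calc (∏ x : Fin (n + 1), if Dist σ x then (∑ i, fs i) (cycleProdAt a σ x) else 1)
      = ∏ x ∈ D, (∑ i, fs i) (cycleProdAt a σ x) := (Finset.prod_filter _ _).symm
    _ = ∏ x : {z // z ∈ D}, ∑ i : Fin n,
          ∏ j ∈ Finset.range (Function.minimalPeriod (⇑σ) (x : Fin (n + 1))), fs i (a ((σ ^ j) (x : Fin (n + 1)))) := by
        rw [Finset.univ_eq_attach, Finset.prod_attach D (fun z => ∑ i : Fin n,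
          ∏ j ∈ Finset.range (Function.minimalPeriod (⇑σ) z), fs i (a ((σ ^ j) z)))]
        exact Finset.prod_congr rfl fun x _ => hfac x
    _ = ∑ c : {z // z ∈ D} → Fin n, ∏ x : {z // z ∈ D},
          ∏ j ∈ Finset.range (Function.minimalPeriod (⇑σ) (x : Fin (n + 1))), fs (c x) (a ((σ ^ j) (x : Fin (n + 1)))) :=
        Fintype.prod_sum _
    _ = ∑ g ∈ Finset.univ.filter (fun g : Fin (n + 1) → Fin n => ∀ y, g (σ y) = g y),
          ∏ y, fs (g y) (a y) := ?_
  refine Finset.sum_bij' (fun c _ => fun y => c ⟨distEl σ y, hmem y⟩)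
      (fun g _ => fun x => g (x : Fin (n + 1))) ?_ ?_ ?_ ?_ ?_
  · -- maps into filter
    intro c _
    simp only [Finset.mem_filter, Finset.mem_univ, true_and]
    intro y
    have hsc : σ.SameCycle (σ y) y := (sameCycle_iff_pow.mpr ⟨1, by simp⟩).symm
    exact congrArg c (Subtype.ext (distEl_congr hsc))
  · intro g _; exact Finset.mem_univ _
  · -- left inverse
    intro c _
    funext x
    exact congrArg c (Subtype.ext (distEl_eq_self (hDist _ x.2)))
  · -- right inverse
    intro g hg
    simp only [Finset.mem_filter, Finset.mem_univ, true_and] at hg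
    funext y
    exact (invariant_of_comp hg (sameCycle_distEl σ y)).symm
  · -- values agree
    intro c _
    have := Finset.prod_fiberwise (Finset.univ : Finset (Fin (n + 1)))
      (fun y => (⟨distEl σ y, hmem y⟩ : {z // z ∈ D}))
      (fun y => fs (c ⟨distEl σ y, hmem y⟩) (a y))
    rw [← this]
    refine Finset.prod_congr rfl fun x _ => ?_
    have hset : (Finset.univ.filter
        (fun y => (⟨distEl σ y, hmem y⟩ : {z // z ∈ D}) = x)) = orbitF σ (x : Fin (n + 1)) := by
      ext y
      simp only [Finset.mem_filter, Finset.mem_univ, true_and, mem_orbitF, Subtype.ext_iff]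
      exact distEl_eq_iff (hDist _ x.2)
    rw [hset, orbitF_eq_image, Finset.prod_image ?inj]
    case inj =>
      intro i hi j hj hij
      exact pow_injOn σ (x : Fin (n + 1)) (Finset.mem_coe.mpr hi) (Finset.mem_coe.mpr hj) hij
    refine Finset.prod_congr rfl fun j _ => ?_
    have hsub : (⟨distEl σ ((σ ^ j) (x : Fin (n + 1))), hmem _⟩ : {z // z ∈ D}) = x :=
      Subtype.ext (by rw [distEl_eq_iff (hDist _ x.2)]; exact sameCycle_iff_pow.mpr ⟨j, rfl⟩)
    rw [hsub]

lemma sign_sum_zero {n : ℕ} (g : Fin (n + 1) → Fin n) :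
    ∑ σ ∈ Finset.univ.filter (fun σ : Equiv.Perm (Fin (n + 1)) => ∀ y, g (σ y) = g y),
      (Equiv.Perm.sign σ : ℤ) = 0 := by
  classical
  obtain ⟨x, x', hne, hgxy⟩ := Fintype.exists_ne_map_eq_of_card_lt g (by simp)
  set τ := Equiv.swap x x' with hτ
  have hgτ : ∀ z, g (τ z) = g z := by
    intro z
    rcases eq_or_ne z x with rfl | hzx
    · rw [hτ, Equiv.swap_apply_left, hgxy]
    rcases eq_or_ne z x' with rfl | hzx'
    · rw [hτ, Equiv.swap_apply_right, hgxy]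
    · rw [hτ, Equiv.swap_apply_of_ne_of_ne hzx hzx']
  refine Finset.sum_involution (fun σ _ => τ * σ) ?_ ?_ ?_ ?_
  · intro σ _
    have : Equiv.Perm.sign (τ * σ) = - Equiv.Perm.sign σ := by
      rw [map_mul, Equiv.Perm.sign_swap hne]
      simp
    rw [this]
    push_cast
    ring
  · intro σ _ _
    intro h
    have h' : τ * σ = σ := h
    have : τ = 1 := by
      have h1 : τ * σ * σ⁻¹ = σ * σ⁻¹ := by rw [h']
      simpa [mul_assoc] using h1
    have hx := congrArg (fun p : Equiv.Perm (Fin (n+1)) => p x) this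
    simp only [hτ, Equiv.swap_apply_left, Equiv.Perm.coe_one, id_eq] at hx
    exact hne hx.symm
  · intro σ hσ
    simp only [Finset.mem_filter, Finset.mem_univ, true_and] at hσ ⊢
    intro y
    rw [Equiv.Perm.mul_apply, hgτ, hσ]
  · intro σ _
    show τ * (τ * σ) = σ
    rw [← mul_assoc, hτ, Equiv.swap_mul_self, one_mul]

end Stmt15Aux


/-- The sum of `n` nonunital ring homomorphisms (given as multiplicative `ℤ`-linear maps)
is an `n`-homomorphism. -/
theorem stmt15 {A B : Type*} [Ring A] [CommRing B] (n : ℕ)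
    (fs : Fin n → (A →ₗ[ℤ] B))
    (hfs : ∀ i, ∀ a a' : A, fs i (a * a') = fs i a * fs i a') :
    IsNHom n (∑ i, fs i) := by
  classical
  constructor
  · intro a a'
    simp only [LinearMap.sum_apply, hfs]
    exact Finset.sum_congr rfl fun i _ => mul_comm _ _
  · intro a
    show (∑ σ : Equiv.Perm (Fin (n + 1)), (Equiv.Perm.sign σ : ℤ) •
      ∏ x : Fin (n + 1),
        if ∀ j : ℕ, (Fintype.equivFin (Fin (n + 1))) x ≤ (Fintype.equivFin (Fin (n + 1))) ((σ ^ j) x)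
        then (∑ i, fs i) (cycleProdAt a σ x) else 1) = 0
    have h1 : ∀ σ : Equiv.Perm (Fin (n + 1)),
        (∏ x : Fin (n + 1),
          if ∀ j : ℕ, (Fintype.equivFin (Fin (n + 1))) x ≤ (Fintype.equivFin (Fin (n + 1))) ((σ ^ j) x)
          then (∑ i, fs i) (cycleProdAt a σ x) else 1)
        = ∑ g ∈ Finset.univ.filter (fun g : Fin (n + 1) → Fin n => ∀ y, g (σ y) = g y),
            ∏ y, fs (g y) (a y) := fun σ => Stmt15Aux.step1 fs hfs a σ
    calc (∑ σ : Equiv.Perm (Fin (n + 1)), (Equiv.Perm.sign σ : ℤ) •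
          ∏ x : Fin (n + 1),
            if ∀ j : ℕ, (Fintype.equivFin (Fin (n + 1))) x ≤ (Fintype.equivFin (Fin (n + 1))) ((σ ^ j) x)
            then (∑ i, fs i) (cycleProdAt a σ x) else 1)
        = ∑ σ : Equiv.Perm (Fin (n + 1)),
            ∑ g ∈ Finset.univ.filter (fun g : Fin (n + 1) → Fin n => ∀ y, g (σ y) = g y),
              (Equiv.Perm.sign σ : ℤ) • ∏ y, fs (g y) (a y) := by
          refine Finset.sum_congr rfl fun σ _ => ?_
          rw [h1 σ, Finset.smul_sum]
      _ = ∑ σ : Equiv.Perm (Fin (n + 1)), ∑ g : Fin (n + 1) → Fin n,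
            if ∀ y, g (σ y) = g y then (Equiv.Perm.sign σ : ℤ) • ∏ y, fs (g y) (a y) else 0 :=
          Finset.sum_congr rfl fun σ _ => Finset.sum_filter _ _
      _ = ∑ g : Fin (n + 1) → Fin n, ∑ σ : Equiv.Perm (Fin (n + 1)),
            if ∀ y, g (σ y) = g y then (Equiv.Perm.sign σ : ℤ) • ∏ y, fs (g y) (a y) else 0 :=
          Finset.sum_comm
      _ = 0 := ?_
    refine Finset.sum_eq_zero fun g _ => ?_
    rw [← Finset.sum_filter, ← Finset.sum_smul, Stmt15Aux.sign_sum_zero g, zero_smul]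
end
end
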